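/- Let μ > 0 with μ ∉ ℤ. There exists θ₀ ∈ (π/2, π) such that for every θ ∈ (π/2, θ₀) there is a constant c > 0 with the following property: for every τ > 0 and every z ∈ ℂ with Re z > 0 and |zτ| ≤ π/sin θ, | τ · Σ_{n=1}^∞ ((nτ)^{μ+1}/(μ+1)) e^{−nzτ} − Γ(μ+1) z^{−μ−2} | ≤ c τ^{μ+2}. -/

import Mathlib

open MeasureTheory Real Set Complex Filter Asymptotics

noncomputable section

lemma aux_int {p δ : ℝ} (hp : 0 ≤ p) (hδ : 0 < δ) :
    IntegrableOn (fun t : ℝ => t ^ p * Real.exp (-δ * t)) (Set.Ioi 0) := by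
  apply integrable_of_isBigO_exp_neg (half_pos hδ)
  · exact ((continuous_id.rpow_const (fun x => Or.inr hp)).mul
      (Real.continuous_exp.comp (continuous_const.mul continuous_id))).continuousOn
  · have h := tendsto_rpow_mul_exp_neg_mul_atTop_nhds_zero p (δ/2) (half_pos hδ)
    have h2 : (fun t : ℝ => t ^ p * Real.exp (-δ * t) / Real.exp (-(δ/2) * t))
        = fun t : ℝ => t ^ p * Real.exp (-(δ/2) * t) := by
      funext t
      rw [mul_div_assoc, ← Real.exp_sub]
      ring_nf
    refine (Asymptotics.isLittleO_of_tendsto (fun x hx => absurd hx (Real.exp_ne_zero _)) ?_).isBigO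
    rw [h2]; exact h

lemma aux_intC {p : ℝ} (hp : 0 ≤ p) {b : ℂ} (hb : 0 < b.re) :
    IntegrableOn (fun t : ℝ => ((t ^ p : ℝ) : ℂ) * Complex.exp (-b * t)) (Set.Ioi 0) := by
  have hcont : Continuous (fun t : ℝ => ((t ^ p : ℝ) : ℂ) * Complex.exp (-b * t)) := by
    exact (Complex.continuous_ofReal.comp (continuous_id.rpow_const (fun x => Or.inr hp))).mul
      (Complex.continuous_exp.comp (by continuity))
  refine (aux_int hp hb).mono' hcont.aestronglyMeasurable.restrict ?_
  rw [ae_restrict_iff' measurableSet_Ioi]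
  filter_upwards with t ht
  simp only [norm_mul, Complex.norm_exp, Complex.norm_real, Real.norm_eq_abs]
  rw [_root_.abs_of_nonneg (Real.rpow_nonneg (le_of_lt ht) p)]
  apply mul_le_mul_of_nonneg_left _ (Real.rpow_nonneg (le_of_lt ht) p)
  rw [Real.exp_le_exp]
  simp [Complex.neg_re, Complex.mul_re]

lemma laplace {a : ℝ} (ha : 0 < a) {b : ℂ} (hb : 0 < b.re) :
    ∫ t in Ioi (0:ℝ), ((t ^ a : ℝ) : ℂ) * Complex.exp (-b * t)
      = Complex.Gamma ((a:ℂ)+1) * b ^ (-(a:ℂ)-1) := by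
  set U : Set ℂ := {c : ℂ | 0 < c.re} with hUdef
  set f : ℂ → ℂ := fun c => ∫ t in Ioi (0:ℝ), ((t ^ a : ℝ) : ℂ) * Complex.exp (-c * t) with hfdef
  set g : ℂ → ℂ := fun c => Complex.Gamma ((a:ℂ)+1) * c ^ (-(a:ℂ)-1) with hgdef
  have hU : IsOpen U := isOpen_lt continuous_const Complex.continuous_re
  have hUconv : Convex ℝ U := convex_halfSpace_re_gt 0
  -- f is differentiable on U
  have hfd : ∀ c ∈ U, HasDerivAt f (∫ t in Ioi (0:ℝ),
      ((t ^ a : ℝ) : ℂ) * (Complex.exp (-c * t) * (-1 * t))) c := by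
    intro c hc
    have hcre : 0 < c.re := hc
    refine (hasDerivAt_integral_of_dominated_loc_of_deriv_le (s := Metric.ball c (c.re/2))
      (μ := volume.restrict (Set.Ioi 0))
      (F := fun (c':ℂ) (t:ℝ) => ((t ^ a : ℝ) : ℂ) * Complex.exp (-c' * t))
      (F' := fun (c':ℂ) (t:ℝ) => ((t ^ a : ℝ) : ℂ) * (Complex.exp (-c' * t) * (-1 * t)))
      (Metric.ball_mem_nhds c (half_pos hcre))
      (Filter.Eventually.of_forall fun c' => ?_)
      (aux_intC ha.le hcre)
      ?_
      (bound := fun t => t ^ (a+1) * Real.exp (-(c.re/2) * t))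
      ?_
      (aux_int (by linarith) (half_pos hcre))
      ?_).2
    · exact ((Complex.continuous_ofReal.comp (continuous_id.rpow_const
        (fun x => Or.inr ha.le))).mul
        (Complex.continuous_exp.comp (by continuity))).aestronglyMeasurable.restrict
    · exact ((Complex.continuous_ofReal.comp (continuous_id.rpow_const
        (fun x => Or.inr ha.le))).mul
        ((Complex.continuous_exp.comp (by continuity)).mul (by continuity))).aestronglyMeasurable.restrict
    · rw [ae_restrict_iff' measurableSet_Ioi]
      filter_upwards with t ht
      intro c' hc'
      have hre : c.re/2 ≤ c'.re := by
        have := Complex.abs_re_le_norm (c' - c)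
        have h2 : ‖c' - c‖ < c.re/2 := by
          rw [← dist_eq_norm]; exact hc'
        simp only [Complex.sub_re] at this
        have := abs_le.mp this
        linarith [this.1]
      have htpos : (0:ℝ) < t := ht
      simp only [norm_mul, Complex.norm_exp, Complex.norm_real, Real.norm_eq_abs,
        norm_neg, norm_one, one_mul]
      rw [_root_.abs_of_nonneg (Real.rpow_nonneg htpos.le a), _root_.abs_of_nonneg htpos.le,
        Real.rpow_add htpos, Real.rpow_one]
      have hexp : Real.exp ((-c' * t).re) ≤ Real.exp (-(c.re/2) * t) := by
        rw [Real.exp_le_exp]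
        simp only [Complex.neg_re, Complex.mul_re, Complex.ofReal_re, Complex.ofReal_im,
          mul_zero, sub_zero]
        nlinarith
      calc t ^ a * (Real.exp ((-c' * ↑t).re) * t)
          ≤ t ^ a * Real.exp (-(c.re/2) * t) * t := by
            have := mul_le_mul_of_nonneg_right hexp htpos.le
            nlinarith [Real.rpow_nonneg htpos.le a, Real.exp_pos (-(c.re/2)*t), htpos]
        _ = t ^ a * t * Real.exp (-(c.re/2) * t) := by ring
        
    · rw [ae_restrict_iff' measurableSet_Ioi]
      filter_upwards with t ht
      intro c' _
      have : HasDerivAt (fun c' : ℂ => Complex.exp (-c' * t))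
          (Complex.exp (-c' * t) * (-1 * t)) c' := by
        have h1 : HasDerivAt (fun c' : ℂ => -c' * (t:ℂ)) (-1 * t) c' :=
          ((hasDerivAt_id c').neg.mul_const _)
        exact h1.cexp
      exact this.const_mul _
  -- g is differentiable on U
  have hgd : ∀ c ∈ U, DifferentiableAt ℂ g c := by
    intro c hc
    apply DifferentiableAt.const_mul
    exact (differentiableAt_id.cpow (differentiableAt_const _) (Or.inl hc))
  -- equality on positive reals
  have hreal : ∀ r : ℝ, 0 < r → f r = g r := by
    intro r hr
    have key := Complex.integral_cpow_mul_exp_neg_mul_Ioi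
      (a := (a:ℂ)+1) (by simp only [Complex.add_re, Complex.ofReal_re, Complex.one_re]; positivity) hr
    have h1 : ∀ t ∈ Ioi (0:ℝ), ((t ^ a : ℝ) : ℂ) * Complex.exp (-(r:ℂ) * t)
        = (t:ℂ) ^ ((a:ℂ)+1-1) * Complex.exp (-((r:ℂ) * (t:ℂ))) := by
      intro t ht
      have htpos : (0:ℝ) < t := ht
      rw [add_sub_cancel_right, ← Complex.ofReal_cpow htpos.le]
      ring_nf
    rw [hfdef]
    simp only
    rw [setIntegral_congr_fun measurableSet_Ioi h1, key, hgdef]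
    have harg : Complex.arg r ≠ π := by
      rw [Complex.arg_ofReal_of_nonneg hr.le]
      exact Real.pi_ne_zero.symm
    rw [one_div, Complex.inv_cpow _ _ harg, ← Complex.cpow_neg]
    have : -((a:ℂ)+1) = -(a:ℂ)-1 := by ring
    rw [this, mul_comm]
  -- identity theorem
  have hfdOn : DifferentiableOn ℂ f U :=
    fun c hc => ((hfd c hc).differentiableAt).differentiableWithinAt
  have hgdOn : DifferentiableOn ℂ g U :=
    fun c hc => (hgd c hc).differentiableWithinAt
  have hfan : AnalyticOnNhd ℂ f U := hfdOn.analyticOnNhd hU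
  have hgan : AnalyticOnNhd ℂ g U := hgdOn.analyticOnNhd hU
  have h1U : (1:ℂ) ∈ U := by simp [hUdef]
  have hfreq : ∃ᶠ z in nhdsWithin (1:ℂ) {(1:ℂ)}ᶜ, f z = g z := by
    have htend : Filter.Tendsto (fun n : ℕ => ((1 + 1/(n+1) : ℝ) : ℂ)) Filter.atTop
        (nhdsWithin (1:ℂ) {(1:ℂ)}ᶜ) := by
      apply tendsto_nhdsWithin_of_tendsto_nhds_of_eventually_within
      · have : Filter.Tendsto (fun n : ℕ => (1 + 1/(n+1) : ℝ)) Filter.atTop (nhds 1) := by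
          have := tendsto_one_div_add_atTop_nhds_zero_nat (𝕜 := ℝ)
          have h2 := this.const_add 1
          simpa using h2
        have h3 := (Complex.continuous_ofReal.tendsto 1).comp this
        have h4 : ((1:ℝ):ℂ) = 1 := by norm_num
        rw [← h4]; exact h3
      · filter_upwards with n
        simp only [Set.mem_compl_iff, Set.mem_singleton_iff]
        intro h
        have : (1 + 1/(n+1) : ℝ) = 1 := by exact_mod_cast h
        have hpos : (0:ℝ) < 1/(n+1) := by positivity
        linarith
    apply htend.frequently
    apply Filter.Eventually.frequently
    filter_upwards with n
    exact hreal _ (by positivity)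
  have := hfan.eqOn_of_preconnected_of_frequently_eq hgan hUconv.isPreconnected h1U hfreq
  exact this hb

lemma lipschitz {a : ℝ} (ha : 1 < a) {w : ℂ} (hw : 0 < w.re) :
    Summable (fun k : ℤ => Complex.Gamma ((a:ℂ)+1) * (w + 2*π*Complex.I*k) ^ (-(a:ℂ)-1)) ∧
    ∑' n : ℕ, ((((n:ℝ)+1) ^ a : ℝ) : ℂ) * Complex.exp (-w * (((n:ℝ)+1) : ℂ))
      = ∑' k : ℤ, Complex.Gamma ((a:ℂ)+1) * (w + 2*π*Complex.I*k) ^ (-(a:ℂ)-1) := by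
  have ha0 : (0:ℝ) < a := by linarith
  set f : ℝ → ℂ := fun x => ((max x 0) ^ a : ℝ) * Complex.exp (-w * x) with hfdef
  have hcont : Continuous f := by
    exact (Complex.continuous_ofReal.comp ((continuous_id.max continuous_const).rpow_const
      (fun x => Or.inr ha0.le))).mul (Complex.continuous_exp.comp (by continuity))
  have hnorm : ∀ x : ℝ, 0 < x → ‖f x‖ = x ^ a * Real.exp (-w.re * x) := by
    intro x hx
    rw [hfdef]
    simp only [norm_mul, Complex.norm_real, Real.norm_eq_abs, Complex.norm_exp]
    rw [max_eq_left hx.le, _root_.abs_of_nonneg (Real.rpow_nonneg hx.le a)]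
    congr 1
    simp [Complex.neg_re, Complex.mul_re]
  have hzero : ∀ x : ℝ, x ≤ 0 → f x = 0 := by
    intro x hx
    rw [hfdef]
    simp only
    rw [max_eq_right hx, Real.zero_rpow (by positivity : a ≠ 0)]
    simp
  -- decay of f
  have hdecay : f =O[Filter.cocompact ℝ] (|·| ^ (-2:ℝ)) := by
    rw [cocompact_eq_atBot_atTop, Asymptotics.isBigO_sup]
    constructor
    · have hev : f =ᶠ[Filter.atBot] (fun _ => (0:ℂ)) := by
        filter_upwards [Filter.eventually_le_atBot (0:ℝ)] with x hx
        exact hzero x hx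
      exact hev.trans_isBigO (Asymptotics.isBigO_zero _ _)
    · have h0 : Filter.Tendsto (fun x:ℝ => x ^ (a+2) * Real.exp (-w.re * x))
          Filter.atTop (nhds 0) := tendsto_rpow_mul_exp_neg_mul_atTop_nhds_zero _ _ hw
      have hev : ∀ᶠ x:ℝ in Filter.atTop, x ^ (a+2) * Real.exp (-w.re * x) ≤ 1 :=
        h0.eventually_le_const zero_lt_one
      apply Asymptotics.IsBigO.of_bound 1
      filter_upwards [hev, Filter.eventually_ge_atTop (1:ℝ)] with x hx hx1
      have hxpos : (0:ℝ) < x := by linarith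
      rw [hnorm x hxpos, Real.norm_eq_abs, _root_.abs_of_nonneg
        (Real.rpow_nonneg (abs_nonneg x) _), _root_.abs_of_nonneg hxpos.le, one_mul,
        Real.rpow_neg hxpos.le]
      rw [inv_eq_one_div, le_div_iff₀ (by positivity : (0:ℝ) < x ^ (2:ℝ))]
      calc x ^ a * Real.exp (-w.re * x) * x ^ (2:ℝ)
          = x ^ (a+2) * Real.exp (-w.re * x) := by
            rw [Real.rpow_add hxpos]; ring
        _ ≤ 1 := hx
  -- Fourier transform of f
  have hFT : ∀ ξ : ℝ, FourierTransform.fourier f ξ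
      = Complex.Gamma ((a:ℂ)+1) * (w + 2*π*Complex.I*ξ) ^ (-(a:ℂ)-1) := by
    intro ξ
    rw [Real.fourier_real_eq_integral_exp_smul]
    have hb : (0:ℝ) < (w + 2*π*Complex.I*ξ).re := by
      simpa using hw
    have hz : ∀ x ∉ Ioi (0:ℝ),
        Complex.exp (↑(-2 * π * x * ξ) * Complex.I) • f x = 0 := by
      intro x hx
      rw [smul_eq_mul, hzero x (le_of_not_gt (by simpa using hx)), mul_zero]
    rw [← setIntegral_eq_integral_of_forall_compl_eq_zero hz]
    have hcongr : ∀ x ∈ Ioi (0:ℝ), Complex.exp (↑(-2 * π * x * ξ) * Complex.I) • f x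
        = ((x ^ a : ℝ) : ℂ) * Complex.exp (-(w + 2*π*Complex.I*ξ) * x) := by
      intro x hx
      have hxpos : (0:ℝ) < x := hx
      rw [smul_eq_mul, hfdef]
      simp only
      rw [max_eq_left hxpos.le, mul_comm, mul_assoc, ← Complex.exp_add]
      congr 2
      push_cast
      ring
    rw [setIntegral_congr_fun measurableSet_Ioi hcongr, laplace ha0 hb]
  -- decay of Fourier transform
  have hFdecay : (FourierTransform.fourier f) =O[Filter.cocompact ℝ] (|·| ^ (-2:ℝ)) := by
    have hbd : ∀ ξ : ℝ, max 1 ‖w‖ ≤ |ξ| →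
        ‖FourierTransform.fourier f ξ‖ ≤ ‖Complex.Gamma ((a:ℂ)+1)‖ * |ξ| ^ (-2:ℝ) := by
      intro ξ hξ
      have h1 : (1:ℝ) ≤ |ξ| := le_trans (le_max_left _ _) hξ
      have hwle : ‖w‖ ≤ |ξ| := le_trans (le_max_right _ _) hξ
      rw [hFT ξ, norm_mul]
      apply mul_le_mul_of_nonneg_left _ (norm_nonneg _)
      have he : (-(a:ℂ)-1) = ((-(a+1) : ℝ) : ℂ) := by push_cast; ring
      rw [he, Complex.norm_cpow_real]
      have habs : |ξ| ≤ ‖(w + 2*π*Complex.I*ξ)‖ := by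
        have h2 : ‖(2*π*Complex.I*(ξ:ℂ))‖ ≤ ‖(w + 2*π*Complex.I*ξ)‖
            + ‖w‖ := by
          calc ‖(2*π*Complex.I*(ξ:ℂ))‖
              = ‖(w + 2*π*Complex.I*ξ) + (-w)‖ := by congr 1; ring
            _ ≤ ‖(w + 2*π*Complex.I*ξ)‖ + ‖-w‖ :=
                norm_add_le _ _
            _ = ‖(w + 2*π*Complex.I*ξ)‖ + ‖w‖ := by
                rw [norm_neg]
        have h3 : ‖(2*π*Complex.I*(ξ:ℂ))‖ = 2*π*|ξ| := by
          rw [norm_mul, norm_mul, norm_mul, Complex.norm_two, Complex.norm_real,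
            Complex.norm_I, Complex.norm_real, Real.norm_eq_abs, Real.norm_eq_abs, _root_.abs_of_pos Real.pi_pos, mul_one]
        rw [h3] at h2
        have hwle' : ‖w‖ ≤ |ξ| := by
          exact hwle
        have hπ : (4:ℝ) ≤ 2*π := by linarith [Real.pi_gt_three]
        nlinarith [abs_nonneg ξ]
      calc ‖(w + 2*π*Complex.I*ξ)‖ ^ (-(a+1))
          ≤ |ξ| ^ (-(a+1)) := by
            apply Real.rpow_le_rpow_of_nonpos (by linarith) habs (by linarith)
        _ ≤ |ξ| ^ (-2:ℝ) := Real.rpow_le_rpow_of_exponent_le h1 (by linarith)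
    apply Asymptotics.IsBigO.of_bound ‖Complex.Gamma ((a:ℂ)+1)‖
    rw [cocompact_eq_atBot_atTop, Filter.eventually_sup]
    constructor
    · filter_upwards [Filter.eventually_le_atBot (-(max 1 ‖w‖))] with ξ hξ
      have : max 1 ‖w‖ ≤ |ξ| := le_trans (by linarith) (neg_le_abs ξ)
      simpa [Real.norm_eq_abs, _root_.abs_of_nonneg (Real.rpow_nonneg (abs_nonneg ξ) _)]
        using hbd ξ this
    · filter_upwards [Filter.eventually_ge_atTop (max 1 ‖w‖)] with ξ hξ
      have : max 1 ‖w‖ ≤ |ξ| := le_trans hξ (le_abs_self ξ)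
      simpa [Real.norm_eq_abs, _root_.abs_of_nonneg (Real.rpow_nonneg (abs_nonneg ξ) _)]
        using hbd ξ this
  -- summability of the Fourier side
  have hsum : Summable (fun k : ℤ => FourierTransform.fourier f k) :=
    summable_of_isBigO (Real.summable_abs_int_rpow one_lt_two)
      (hFdecay.comp_tendsto Int.tendsto_coe_cofinite)
  have hsum' : Summable (fun k : ℤ =>
      Complex.Gamma ((a:ℂ)+1) * (w + 2*π*Complex.I*k) ^ (-(a:ℂ)-1)) := by
    apply hsum.congr
    intro k
    rw [hFT k]
    norm_cast
  -- Poisson summation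
  have hP := Real.tsum_eq_tsum_fourier_of_rpow_decay hcont one_lt_two hdecay hFdecay 0
  simp only [zero_add] at hP
  refine ⟨hsum', ?_⟩
  -- LHS of Poisson
  have hL : ∑' n : ℤ, f n = ∑' n : ℕ, ((((n:ℝ)+1) ^ a : ℝ) : ℂ)
      * Complex.exp (-w * (((n:ℝ)+1) : ℂ)) := by
    rw [← Function.Injective.tsum_eq (g := fun k : ℕ => (k:ℤ)+1) ?_ ?_]
    · apply tsum_congr
      intro k
      rw [hfdef]
      simp only
      have hk : ((((k:ℤ)+1 : ℤ) : ℝ)) = (k:ℝ)+1 := by push_cast; ring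
      rw [hk, max_eq_left (by positivity)]
      push_cast
      ring_nf
    · intro m n h
      simpa using h
    · intro n hn
      have hne : f (n:ℝ) ≠ 0 := hn
      have hpos : 0 < n := by
        by_contra hle
        push_neg at hle
        exact hne (hzero n (by exact_mod_cast hle))
      exact ⟨(n-1).toNat, by show ((n-1).toNat : ℤ) + 1 = n; omega⟩
  rw [← hL, hP]
  apply tsum_congr
  intro k
  rw [hFT k]
  have h0c : ((0:ℝ) : UnitAddCircle) = 0 := rfl
  rw [h0c, fourier_eval_zero, mul_one]
  norm_cast

lemma cpow_ofReal_mul {r : ℝ} (hr : 0 < r) {v : ℂ} (hv : v ≠ 0) (e : ℂ) :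
    ((r:ℂ) * v) ^ e = (r:ℂ) ^ e * v ^ e := by
  have hr0 : (r:ℂ) ≠ 0 := by exact_mod_cast hr.ne'
  rw [Complex.cpow_def_of_ne_zero (mul_ne_zero hr0 hv),
    Complex.cpow_def_of_ne_zero hr0, Complex.cpow_def_of_ne_zero hv,
    ← Complex.exp_add, Complex.log_ofReal_mul hr hv, ← Complex.ofReal_log hr.le]
  congr 1
  ring

theorem stmt_11 (μ : ℝ) (hμ : 0 < μ) (hμ2 : ¬ ∃ k : ℤ, μ = k) :
    ∃ θ₀ ∈ Set.Ioo (π/2) π, ∀ θ ∈ Set.Ioo (π/2) θ₀,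
      ∃ c > (0:ℝ), ∀ τ > (0:ℝ), ∀ z : ℂ, 0 < z.re → ‖z * (τ:ℂ)‖ ≤ π / Real.sin θ →
        ‖(τ:ℂ) * ∑' n : ℕ,
              (((((n:ℝ)+1)*τ) ^ (μ+1) / (μ+1) : ℝ) : ℂ) * Complex.exp (-((n:ℂ)+1) * z * τ)
            - (Real.Gamma (μ+1) : ℂ) * z ^ (-(μ:ℂ) - 2)‖ ≤ c * τ ^ (μ+2) := by
  have hπ := Real.pi_pos
  refine ⟨5*π/6, ⟨by linarith, by linarith⟩, ?_⟩
  intro θ hθ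
  obtain ⟨hθ1, hθ2⟩ := hθ
  -- sin θ > 1/2
  have hsinpos : 0 < Real.sin θ :=
    Real.sin_pos_of_pos_of_lt_pi (by linarith) (by linarith)
  have hsinhalf : 1/2 < Real.sin θ := by
    have h1 : Real.sin θ = Real.cos (θ - π/2) := by
      rw [← Real.cos_pi_div_two_sub θ, show π/2 - θ = -(θ - π/2) by ring, Real.cos_neg]
    have h2 : Real.cos (π/3) < Real.cos (θ - π/2) := by
      apply Real.strictAntiOn_cos ⟨by linarith, by linarith⟩ ⟨by linarith, by linarith⟩
      linarith
    rw [Real.cos_pi_div_three] at h2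
    linarith [h1 ▸ h2]
  set M : ℝ := π / Real.sin θ with hMdef
  have hMpos : 0 < M := div_pos hπ hsinpos
  have hM2π : M < 2*π := by
    rw [hMdef, div_lt_iff₀ hsinpos]
    nlinarith
  have hgap : 0 < 2*π - M := by linarith
  -- constants
  set s : ℝ := μ + 2 with hsdef
  have hs1 : (1:ℝ) < s := by linarith
  have hKsum : Summable (fun k : ℤ => |(k:ℝ)| ^ (-s)) := Real.summable_abs_int_rpow hs1
  set KZ : ℝ := ∑' k : ℤ, |(k:ℝ)| ^ (-s) with hKZdef
  have hKZ0 : 0 ≤ KZ := tsum_nonneg (fun k => Real.rpow_nonneg (abs_nonneg _) _)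
  have hΓpos : 0 < Real.Gamma (μ+1) := Real.Gamma_pos_of_pos (by linarith)
  have hΓ2pos : 0 < Real.Gamma (μ+2) := Real.Gamma_pos_of_pos (by linarith)
  refine ⟨Real.Gamma (μ+1) * ((2*π - M) ^ (-s) * KZ) + 1, by positivity, ?_⟩
  intro τ hτ z hz hzτ
  set w : ℂ := z * (τ:ℂ) with hwdef
  have hwre : 0 < w.re := by
    rw [hwdef]
    simp only [Complex.mul_re, Complex.ofReal_re, Complex.ofReal_im, mul_zero, sub_zero]
    positivity
  have hwne : w ≠ 0 := by
    intro h
    rw [h] at hwre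
    simp at hwre
  have hwM : ‖w‖ ≤ M := by
    exact hzτ
  -- Lipschitz formula
  obtain ⟨hsum, hform⟩ := lipschitz (a := μ+1) (by linarith) hwre
  have hee : (-((μ+1:ℝ):ℂ)-1) = ((-s : ℝ) : ℂ) := by rw [hsdef]; push_cast; ring
  have hΓc : Complex.Gamma (((μ+1:ℝ):ℂ)+1) = ((Real.Gamma (μ+2) : ℝ) : ℂ) := by
    have h1 : (((μ+1:ℝ):ℂ)+1) = ((μ+2:ℝ):ℂ) := by push_cast; ring
    rw [h1, Complex.Gamma_ofReal]
  rw [hee, hΓc] at hsum hform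
  -- transform statement sum
  have hτc : (τ:ℂ) ≠ 0 := by exact_mod_cast hτ.ne'
  have hsne : (-s : ℝ) ≠ 0 := by rw [hsdef]; intro h; linarith
  have hτne : ((μ+1:ℝ):ℂ) ≠ 0 := by
    simp only [ne_eq, Complex.ofReal_eq_zero]
    linarith
  have hstep1 : ∀ n : ℕ,
      (((((n:ℝ)+1)*τ) ^ (μ+1) / (μ+1) : ℝ) : ℂ) * Complex.exp (-((n:ℂ)+1) * z * τ)
      = ((τ ^ (μ+1) : ℝ) : ℂ) / ((μ+1:ℝ):ℂ)
        * (((((n:ℝ)+1) ^ (μ+1) : ℝ) : ℂ) * Complex.exp (-w * (((n:ℝ)+1) : ℂ))) := by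
    intro n
    have hexp : Complex.exp (-((n:ℂ)+1) * z * τ) = Complex.exp (-w * (((n:ℝ)+1) : ℂ)) := by
      congr 1
      rw [hwdef]
      push_cast
      ring
    rw [hexp, Real.mul_rpow (by positivity) hτ.le]
    push_cast
    ring
  have hstep2 : (τ:ℂ) * ∑' n : ℕ,
      (((((n:ℝ)+1)*τ) ^ (μ+1) / (μ+1) : ℝ) : ℂ) * Complex.exp (-((n:ℂ)+1) * z * τ)
      = ((τ ^ (μ+2) : ℝ) : ℂ) / ((μ+1:ℝ):ℂ)
        * ∑' k : ℤ, ((Real.Gamma (μ+2) : ℝ) : ℂ) * (w + 2*π*Complex.I*k) ^ ((-s : ℝ) : ℂ) := by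
    rw [tsum_congr hstep1, tsum_mul_left, hform, ← mul_assoc]
    congr 1
    have hττ : τ ^ (μ+2) = τ * τ ^ (μ+1) := by
      rw [show μ+2 = 1 + (μ+1) by ring, Real.rpow_one_add' hτ.le (by linarith)]
    rw [hττ, Complex.ofReal_mul]
    ring
  -- rewrite z-power
  have hzpow : z ^ (-(μ:ℂ) - 2) = ((τ ^ (μ+2) : ℝ) : ℂ) * w ^ ((-s : ℝ) : ℂ) := by
    have hz0 : z = ((τ⁻¹ : ℝ) : ℂ) * w := by
      rw [hwdef]
      push_cast
      rw [mul_comm z, ← mul_assoc, inv_mul_cancel₀ hτc, one_mul]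
    have he2 : (-(μ:ℂ) - 2) = ((-s : ℝ) : ℂ) := by rw [hsdef]; push_cast; ring
    rw [he2, hz0, cpow_ofReal_mul (by positivity) hwne]
    congr 1
    rw [← Complex.ofReal_cpow (by positivity : (0:ℝ) ≤ τ⁻¹)]
    congr 1
    rw [hsdef, ← Real.rpow_neg_one τ, ← Real.rpow_mul hτ.le]
    norm_num
  -- split k = 0 term
  have hsplit := hsum.tsum_eq_add_tsum_ite 0
  have h00 : ((Real.Gamma (μ+2) : ℝ) : ℂ) * (w + 2*π*Complex.I*((0:ℤ):ℂ)) ^ ((-s : ℝ) : ℂ)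
      = ((Real.Gamma (μ+2) : ℝ) : ℂ) * w ^ ((-s : ℝ) : ℂ) := by
    norm_num
  rw [h00] at hsplit
  -- main difference identity
  have hdiff : (τ:ℂ) * (∑' n : ℕ,
        (((((n:ℝ)+1)*τ) ^ (μ+1) / (μ+1) : ℝ) : ℂ) * Complex.exp (-((n:ℂ)+1) * z * τ))
      - (Real.Gamma (μ+1) : ℂ) * z ^ (-(μ:ℂ) - 2)
      = ((τ ^ (μ+2) : ℝ) : ℂ) / ((μ+1:ℝ):ℂ) * ∑' k : ℤ, (if k = 0 then 0 else
          ((Real.Gamma (μ+2) : ℝ) : ℂ) * (w + 2*π*Complex.I*k) ^ ((-s : ℝ) : ℂ)) := by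
    have hΓΓ : ((Real.Gamma (μ+2) : ℝ) : ℂ) = ((μ+1:ℝ):ℂ) * (Real.Gamma (μ+1) : ℂ) := by
      have h5 : Real.Gamma (μ+2) = (μ+1) * Real.Gamma (μ+1) := by
        have h6 := Real.Gamma_add_one (by linarith : μ+1 ≠ 0)
        rw [show μ+1+1 = μ+2 by ring] at h6
        exact h6
      rw [h5, Complex.ofReal_mul]
    set T : ℂ := ∑' k : ℤ, (if k = 0 then 0 else
        ((Real.Gamma (μ+2) : ℝ) : ℂ) * (w + 2*π*Complex.I*k) ^ ((-s : ℝ) : ℂ)) with hTdef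
    rw [hstep2, hsplit, hzpow, hΓΓ]
    have hdm : (((τ ^ (μ+2) : ℝ) : ℂ)) / ((μ+1:ℝ):ℂ) * ((μ+1:ℝ):ℂ) = ((τ ^ (μ+2) : ℝ) : ℂ) :=
      div_mul_cancel₀ _ hτne
    linear_combination ((Real.Gamma (μ+1) : ℂ) * w ^ ((-s : ℝ) : ℂ)) * hdm
  rw [hdiff]
  -- norm bound
  have hbound : ∀ k : ℤ, ‖(if k = 0 then 0 else
      ((Real.Gamma (μ+2) : ℝ) : ℂ) * (w + 2*π*Complex.I*k) ^ ((-s : ℝ) : ℂ))‖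
      ≤ Real.Gamma (μ+2) * ((2*π - M) ^ (-s) * |(k:ℝ)| ^ (-s)) := by
    intro k
    by_cases hk : k = 0
    · rw [if_pos hk, hk]
      simp [Real.zero_rpow hsne]
    · rw [if_neg hk, norm_mul, Complex.norm_real, Real.norm_eq_abs,
        Complex.norm_cpow_real, _root_.abs_of_pos hΓ2pos]
      apply mul_le_mul_of_nonneg_left _ hΓ2pos.le
      have hk1 : (1:ℝ) ≤ |(k:ℝ)| := by
        rw [← Int.cast_abs]
        exact_mod_cast Int.one_le_abs hk
      have habs : (2*π - M) * |(k:ℝ)| ≤ ‖(w + 2*π*Complex.I*k)‖ := by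
        have h2 : ‖(2*π*Complex.I*((k:ℝ):ℂ))‖ ≤ ‖(w + 2*π*Complex.I*k)‖
            + ‖w‖ := by
          calc ‖(2*π*Complex.I*((k:ℝ):ℂ))‖
              = ‖(w + 2*π*Complex.I*k) + (-w)‖ := by congr 1; push_cast; ring
            _ ≤ ‖(w + 2*π*Complex.I*k)‖ + ‖-w‖ :=
                norm_add_le _ _
            _ = ‖(w + 2*π*Complex.I*k)‖ + ‖w‖ := by
                rw [norm_neg]
        have h3 : ‖(2*π*Complex.I*((k:ℝ):ℂ))‖ = 2*π*|(k:ℝ)| := by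
          rw [norm_mul, norm_mul, norm_mul, Complex.norm_two, Complex.norm_real,
            Complex.norm_I, Complex.norm_real, Real.norm_eq_abs, Real.norm_eq_abs, _root_.abs_of_pos hπ, mul_one]
        rw [h3] at h2
        nlinarith
      calc ‖(w + 2*π*Complex.I*k)‖ ^ (-s)
          ≤ ((2*π - M) * |(k:ℝ)|) ^ (-s) :=
            Real.rpow_le_rpow_of_nonpos (by positivity) habs (by linarith)
        _ = (2*π - M) ^ (-s) * |(k:ℝ)| ^ (-s) :=
            Real.mul_rpow hgap.le (abs_nonneg _)
  have hsumB : Summable (fun k : ℤ =>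
      Real.Gamma (μ+2) * ((2*π - M) ^ (-s) * |(k:ℝ)| ^ (-s))) :=
    ((hKsum.mul_left _).mul_left _)
  have hsumN : Summable (fun k : ℤ => ‖(if k = 0 then 0 else
      ((Real.Gamma (μ+2) : ℝ) : ℂ) * (w + 2*π*Complex.I*k) ^ ((-s : ℝ) : ℂ))‖) :=
    Summable.of_nonneg_of_le (fun k => norm_nonneg _) hbound hsumB
  have htsum_le : ‖∑' k : ℤ, (if k = 0 then 0 else
      ((Real.Gamma (μ+2) : ℝ) : ℂ) * (w + 2*π*Complex.I*k) ^ ((-s : ℝ) : ℂ))‖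
      ≤ Real.Gamma (μ+2) * ((2*π - M) ^ (-s) * KZ) := by
    calc ‖∑' k : ℤ, (if k = 0 then 0 else
        ((Real.Gamma (μ+2) : ℝ) : ℂ) * (w + 2*π*Complex.I*k) ^ ((-s : ℝ) : ℂ))‖
        ≤ ∑' k : ℤ, ‖(if k = 0 then 0 else
          ((Real.Gamma (μ+2) : ℝ) : ℂ) * (w + 2*π*Complex.I*k) ^ ((-s : ℝ) : ℂ))‖ :=
          norm_tsum_le_tsum_norm hsumN
      _ ≤ ∑' k : ℤ, Real.Gamma (μ+2) * ((2*π - M) ^ (-s) * |(k:ℝ)| ^ (-s)) :=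
          Summable.tsum_le_tsum hbound hsumN hsumB
      _ = Real.Gamma (μ+2) * ((2*π - M) ^ (-s) * KZ) := by
          rw [hKZdef, tsum_mul_left, tsum_mul_left]
  rw [norm_mul, norm_div]
  have hn1 : ‖((τ ^ (μ+2) : ℝ) : ℂ)‖ = τ ^ (μ+2) := by
    rw [Complex.norm_real, Real.norm_eq_abs, _root_.abs_of_pos (by positivity)]
  have hn2 : ‖((μ+1:ℝ):ℂ)‖ = μ+1 := by
    rw [Complex.norm_real, Real.norm_eq_abs, _root_.abs_of_pos (by linarith)]
  rw [hn1, hn2]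
  have hΓΓ2 : Real.Gamma (μ+2) / (μ+1) = Real.Gamma (μ+1) := by
    have := Real.Gamma_add_one (by linarith : μ+1 ≠ 0)
    rw [show μ+1+1 = μ+2 by ring] at this
    rw [this]
    field_simp
  calc τ ^ (μ+2) / (μ+1) * ‖∑' k : ℤ, (if k = 0 then 0 else
      ((Real.Gamma (μ+2) : ℝ) : ℂ) * (w + 2*π*Complex.I*k) ^ ((-s : ℝ) : ℂ))‖
      ≤ τ ^ (μ+2) / (μ+1) * (Real.Gamma (μ+2) * ((2*π - M) ^ (-s) * KZ)) := by
        apply mul_le_mul_of_nonneg_left htsum_le (by positivity)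
    _ = (Real.Gamma (μ+1) * ((2*π - M) ^ (-s) * KZ)) * τ ^ (μ+2) := by
        rw [← hΓΓ2]
        ring
    _ ≤ (Real.Gamma (μ+1) * ((2*π - M) ^ (-s) * KZ) + 1) * τ ^ (μ+2) := by
        have : (0:ℝ) < τ ^ (μ+2) := by positivity
        nlinarith
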